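/- Let q = e^{−1}. Then ∏_{j≥1} 1/(1+q^j) · ( Σ_{k≥1} (q^k/(1+q^k)) Σ_{ℓ>k} q^{ℓ−1}/(1+q^{2ℓ−1}) ) = Σ_{λ ∈ P} (−1)^{λ_1} Σ_{ℓ≥1} q^{|λ|−ℓ} (λ_{2ℓ−1} − λ_{2ℓ})(λ_1 − λ_ℓ), where the outer sum on the right runs over all partitions λ of all nonnegative integers. -/

import Mathlib

/-- The `k`-th part (1-indexed) of a partition `p` of `n`, where the parts are
listed in non-increasing order, with `partOf p k = 0` when `k` exceeds the
number of parts (or `k = 0`). -/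
noncomputable def partOf {n : ℕ} (p : Nat.Partition n) (k : ℕ) : ℕ :=
  (p.parts.sort (· ≥ ·)).getD (k - 1) 0

open Finset Filter

set_option maxHeartbeats 1000000

namespace RelY

noncomputable def q : ℝ := Real.exp (-1)

lemma q_pos : 0 < q := Real.exp_pos _
lemma q_nonneg : 0 ≤ q := q_pos.le
lemma q_ne_zero : q ≠ 0 := ne_of_gt q_pos
lemma q_le_half : q ≤ 1 / 2 := by
  have h2 : (2 : ℝ) ≤ Real.exp 1 := by
    have := Real.add_one_le_exp (1 : ℝ); linarith
  have : q = (Real.exp 1)⁻¹ := by rw [q, Real.exp_neg]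
  rw [this]
  rw [inv_le_comm₀ (Real.exp_pos 1) (by norm_num)]
  linarith [h2]
lemma q_lt_one : q < 1 := lt_of_le_of_lt q_le_half (by norm_num)

lemma qp_nonneg (k : ℕ) : 0 ≤ q ^ k := pow_nonneg q_nonneg k
lemma qp_pos (k : ℕ) : 0 < q ^ k := pow_pos q_pos k
lemma qp_le_half (k : ℕ) : q ^ (k + 1) ≤ 1 / 2 := by
  calc q ^ (k + 1) ≤ q ^ 1 := pow_le_pow_of_le_one q_nonneg q_lt_one.le (by omega)
  _ = q := pow_one q
  _ ≤ 1 / 2 := q_le_half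
lemma qp_lt_one (k : ℕ) : q ^ (k + 1) < 1 :=
  lt_of_le_of_lt (qp_le_half k) (by norm_num)
lemma one_add_qp_pos (k : ℕ) : 0 < 1 + q ^ (k + 1) := by have := qp_nonneg (k+1); linarith
lemma one_add_qp_ne (k : ℕ) : (1 : ℝ) + q ^ (k + 1) ≠ 0 := ne_of_gt (one_add_qp_pos k)

lemma summable_qp : Summable fun k : ℕ => q ^ (k + 1) := by
  have := (summable_geometric_of_lt_one q_nonneg q_lt_one).mul_left q
  simpa [pow_succ, mul_comm] using this

/-- The multiplicative weight of a finitely supported multiplicity function. -/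
noncomputable def W (r : ℕ → ℝ) (e : ℕ →₀ ℕ) : ℝ := e.prod fun k m => r k ^ m

lemma W_zero (r : ℕ → ℝ) : W r 0 = 1 := by simp [W]

lemma W_add (r : ℕ → ℝ) (f g : ℕ →₀ ℕ) : W r (f + g) = W r f * W r g :=
  Finsupp.prod_add_index' (fun _ => pow_zero _) (fun _ _ _ => pow_add _ _ _)

lemma W_single (r : ℕ → ℝ) (a m : ℕ) : W r (Finsupp.single a m) = r a ^ m :=
  Finsupp.prod_single_index (pow_zero _)

lemma W_eq_prod (r : ℕ → ℝ) (e : ℕ →₀ ℕ) {s : Finset ℕ} (hs : e.support ⊆ s) :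
    W r e = ∏ k ∈ s, r k ^ e k := by
  rw [W, Finsupp.prod]
  exact Finset.prod_subset hs (by
    intro k _ hk
    rw [Finsupp.notMem_support_iff.mp hk, pow_zero])

lemma abs_W (r : ℕ → ℝ) (e : ℕ →₀ ℕ) : |W r e| = W (fun k => |r k|) e := by
  rw [W, W, Finsupp.prod, Finsupp.prod, Finset.abs_prod]
  exact Finset.prod_congr rfl fun k _ => (abs_pow _ _)

lemma W_nonneg {r : ℕ → ℝ} (hr : ∀ k, 0 ≤ r k) (e : ℕ →₀ ℕ) : 0 ≤ W r e :=
  Finset.prod_nonneg fun k _ => pow_nonneg (hr k) _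

lemma W_le_W {r r' : ℕ → ℝ} (hr : ∀ k, 0 ≤ r k) (hle : ∀ k, r k ≤ r' k) (e : ℕ →₀ ℕ) :
    W r e ≤ W r' e :=
  Finset.prod_le_prod (fun k _ => pow_nonneg (hr k) _)
    (fun k _ => pow_le_pow_left₀ (hr k) (hle k) _)

/-- Master summability lemma for products of per-coordinate weights over finsupps. -/
lemma summable_master {w : ℕ → ℕ → ℝ} {ρ : ℕ → ℝ} (s₀ : Finset ℕ)
    (hnn : ∀ k m, 0 ≤ w k m) (hsum : ∀ k, Summable (w k))
    (hρ0 : ∀ k, 0 ≤ ρ k) (hρ1 : ∀ k, ρ k ≤ 7 / 8) (hρs : Summable ρ)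
    (hgeo : ∀ k ∉ s₀, ∀ m, w k m = ρ k ^ m) :
    Summable fun e : ℕ →₀ ℕ => ∏ k ∈ e.support ∪ s₀, w k (e k) := by
  classical
  set F : (ℕ →₀ ℕ) → ℝ := fun e => ∏ k ∈ e.support ∪ s₀, w k (e k) with hF
  have hFnn : ∀ e, 0 ≤ F e := fun e => Finset.prod_nonneg fun k _ => hnn k _
  have hts : ∀ k, 0 ≤ ∑' m, w k m := fun k => tsum_nonneg fun m => hnn k m
  apply summable_of_sum_le hFnn
    (c := (∏ k ∈ s₀, ∑' m, w k m) * Real.exp (8 * ∑' k, ρ k))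
  intro u
  set t : Finset ℕ := u.sup Finsupp.support ∪ s₀ with ht
  have hs₀t : s₀ ⊆ t := Finset.subset_union_right
  set B : ℕ := u.sup fun e => e.support.sup e with hB
  have heB : ∀ e ∈ u, ∀ k, e k ≤ B := by
    intro e he k
    by_cases hk : k ∈ e.support
    · exact le_trans (Finset.le_sup (f := e) hk) (Finset.le_sup (f := fun e => e.support.sup e) he)
    · simp [Finsupp.notMem_support_iff.mp hk]
  -- each F e with e ∈ u equals product over t
  have hFt : ∀ e ∈ u, F e = ∏ k ∈ t, w k (e k) := by
    intro e he
    apply Finset.prod_subset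
    · exact Finset.union_subset
        (le_trans (Finset.le_sup (f := Finsupp.support) he) Finset.subset_union_left)
        hs₀t
    · intro k _ hk
      have hks : k ∉ s₀ := fun h => hk (Finset.mem_union_right _ h)
      have hke : e k = 0 := by
        by_contra h
        exact hk (Finset.mem_union_left _ (Finsupp.mem_support_iff.mpr h))
      rw [hgeo k hks, hke, pow_zero]
  -- step 2 : sum over u is at most the expanded finite product
  have step2 : ∑ e ∈ u, F e ≤ ∏ k ∈ t, ∑ m ∈ Finset.range (B + 1), w k m := by
    rw [Finset.prod_sum]
    -- injection from u into pi finset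
    have hmem : ∀ e ∈ u, (fun k _ => e k : ∀ k ∈ t, ℕ) ∈ t.pi fun _ => Finset.range (B + 1) := by
      intro e he
      rw [Finset.mem_pi]
      intro k _
      rw [Finset.mem_range]
      exact Nat.lt_succ_of_le (heB e he k)
    have hsupp : ∀ e ∈ u, e.support ⊆ t := fun e he =>
      le_trans (Finset.le_sup (f := Finsupp.support) he) Finset.subset_union_left
    have hinj : ∀ e₁ ∈ u, ∀ e₂ ∈ u,
        (fun k (_ : k ∈ t) => e₁ k) = (fun k (_ : k ∈ t) => e₂ k) → e₁ = e₂ := by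
      intro e₁ h₁ e₂ h₂ heq
      ext k
      by_cases hk : k ∈ t
      · exact congrFun (congrFun heq k) hk
      · have ha : e₁ k = 0 := by
          by_contra h
          exact hk (hsupp e₁ h₁ (Finsupp.mem_support_iff.mpr h))
        have hb : e₂ k = 0 := by
          by_contra h
          exact hk (hsupp e₂ h₂ (Finsupp.mem_support_iff.mpr h))
        rw [ha, hb]
    have himg : ∑ p ∈ u.image (fun e => (fun k (_ : k ∈ t) => e k : ∀ k ∈ t, ℕ)),
          (∏ k ∈ t.attach, w k.1 (p k.1 k.2))
        = ∑ e ∈ u, ∏ k ∈ t.attach, w k.1 (e k.1) := Finset.sum_image hinj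
    calc ∑ e ∈ u, F e = ∑ e ∈ u, ∏ k ∈ t.attach, w k.1 (e k.1) := by
          refine Finset.sum_congr rfl fun e he => ?_
          rw [hFt e he, ← Finset.prod_attach]
      _ = ∑ p ∈ u.image (fun e => (fun k (_ : k ∈ t) => e k : ∀ k ∈ t, ℕ)),
            (∏ k ∈ t.attach, w k.1 (p k.1 k.2)) := himg.symm
      _ ≤ ∑ p ∈ t.pi fun _ => Finset.range (B + 1), ∏ k ∈ t.attach, w k.1 (p k.1 k.2) := by
          apply Finset.sum_le_sum_of_subset_of_nonneg
          · intro p hp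
            rw [Finset.mem_image] at hp
            obtain ⟨e, he, rfl⟩ := hp
            exact hmem e he
          · intro p _ _
            exact Finset.prod_nonneg fun k _ => hnn _ _
  -- step 3 : bound the product
  have hsplit : ∏ k ∈ t, ∑ m ∈ Finset.range (B + 1), w k m
      = (∏ k ∈ t \ s₀, ∑ m ∈ Finset.range (B + 1), w k m) *
        ∏ k ∈ s₀, ∑ m ∈ Finset.range (B + 1), w k m :=
    (Finset.prod_sdiff hs₀t).symm
  have hpartnn : ∀ k, 0 ≤ ∑ m ∈ Finset.range (B + 1), w k m :=
    fun k => Finset.sum_nonneg fun m _ => hnn k m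
  have h1 : ∏ k ∈ s₀, ∑ m ∈ Finset.range (B + 1), w k m ≤ ∏ k ∈ s₀, ∑' m, w k m := by
    apply Finset.prod_le_prod (fun k _ => hpartnn k)
    intro k _
    exact Summable.sum_le_tsum _ (fun m _ => hnn k m) (hsum k)
  have h2 : ∏ k ∈ t \ s₀, ∑ m ∈ Finset.range (B + 1), w k m ≤ Real.exp (8 * ∑' k, ρ k) := by
    have hle : ∀ k ∈ t \ s₀, ∑ m ∈ Finset.range (B + 1), w k m ≤ Real.exp (8 * ρ k) := by
      intro k hk
      have hks : k ∉ s₀ := (Finset.mem_sdiff.mp hk).2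
      have hgeok : ∀ m, w k m = ρ k ^ m := hgeo k hks
      have hρlt : ρ k < 1 := lt_of_le_of_lt (hρ1 k) (by norm_num)
      calc ∑ m ∈ Finset.range (B + 1), w k m = ∑ m ∈ Finset.range (B + 1), ρ k ^ m := by
            exact Finset.sum_congr rfl fun m _ => hgeok m
        _ ≤ ∑' m, ρ k ^ m := Summable.sum_le_tsum _ (fun m _ => pow_nonneg (hρ0 k) m)
            (summable_geometric_of_lt_one (hρ0 k) hρlt)
        _ = (1 - ρ k)⁻¹ := tsum_geometric_of_lt_one (hρ0 k) hρlt
        _ ≤ 1 + 8 * ρ k := by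
            have hpos : (0:ℝ) < 1 - ρ k := by nlinarith [hρ1 k]
            rw [inv_eq_one_div, div_le_iff₀ hpos]
            nlinarith [hρ0 k, hρ1 k]
        _ ≤ Real.exp (8 * ρ k) := by
            have := Real.add_one_le_exp (8 * ρ k); linarith
    calc ∏ k ∈ t \ s₀, ∑ m ∈ Finset.range (B + 1), w k m
        ≤ ∏ k ∈ t \ s₀, Real.exp (8 * ρ k) :=
          Finset.prod_le_prod (fun k _ => hpartnn k) hle
      _ = Real.exp (∑ k ∈ t \ s₀, 8 * ρ k) := (Real.exp_sum _ _).symm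
      _ ≤ Real.exp (8 * ∑' k, ρ k) := by
          apply Real.exp_le_exp.mpr
          rw [← Finset.mul_sum]
          have h := Summable.sum_le_tsum (t \ s₀) (fun k _ => hρ0 k) hρs
          linarith
  calc ∑ e ∈ u, F e ≤ ∏ k ∈ t, ∑ m ∈ Finset.range (B + 1), w k m := step2
    _ = (∏ k ∈ t \ s₀, ∑ m ∈ Finset.range (B + 1), w k m) *
        ∏ k ∈ s₀, ∑ m ∈ Finset.range (B + 1), w k m := hsplit
    _ ≤ Real.exp (8 * ∑' k, ρ k) * ∏ k ∈ s₀, ∑' m, w k m := by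
        apply mul_le_mul h2 h1 (Finset.prod_nonneg fun k _ => hpartnn k) (Real.exp_pos _).le
    _ = (∏ k ∈ s₀, ∑' m, w k m) * Real.exp (8 * ∑' k, ρ k) := mul_comm _ _

/-! ### Extraction equivalences -/

noncomputable def extract1 (a : ℕ) : (ℕ →₀ ℕ) ≃ {f : ℕ →₀ ℕ // f a = 0} × ℕ where
  toFun e := (⟨e.erase a, Finsupp.erase_same⟩, e a)
  invFun p := p.1.1 + Finsupp.single a p.2
  left_inv e := by
    simp only
    rw [add_comm, Finsupp.single_add_erase]
  right_inv p := by
    obtain ⟨⟨f, hf⟩, m⟩ := p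
    simp only [Prod.mk.injEq, Subtype.mk.injEq]
    constructor
    · ext k
      by_cases hk : k = a
      · subst hk; simp [Finsupp.erase_same, hf]
      · simp [Finsupp.erase_apply, hk, Finsupp.single_apply, Ne.symm hk]
    · simp [hf, Finsupp.single_apply]

noncomputable def extract2 (a b : ℕ) (hab : a ≠ b) :
    (ℕ →₀ ℕ) ≃ {f : ℕ →₀ ℕ // f a = 0 ∧ f b = 0} × ℕ × ℕ where
  toFun e := (⟨(e.erase a).erase b,
      by constructor
         · rw [Finsupp.erase_apply]
           simp [Ne.symm hab, Finsupp.erase_same]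
         · exact Finsupp.erase_same⟩, e a, e b)
  invFun p := p.1.1 + Finsupp.single a p.2.1 + Finsupp.single b p.2.2
  left_inv e := by
    simp only
    ext k
    by_cases hka : k = a
    · subst hka
      simp [Finsupp.erase_apply, Finsupp.single_apply, hab, Ne.symm hab]
    · by_cases hkb : k = b
      · subst hkb
        simp [Finsupp.erase_apply, Finsupp.single_apply, hab, Ne.symm hab]
      · simp [Finsupp.erase_apply, hka, hkb, Finsupp.single_apply,
          Ne.symm hka, Ne.symm hkb]
  right_inv p := by
    obtain ⟨⟨f, hfa, hfb⟩, m, m'⟩ := p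
    simp only [Prod.mk.injEq, Subtype.mk.injEq]
    refine ⟨?_, ?_, ?_⟩
    · ext k
      by_cases hka : k = a
      · subst hka
        simp [Finsupp.erase_apply, Finsupp.single_apply, hab, Ne.symm hab, hfa]
      · by_cases hkb : k = b
        · subst hkb
          simp [Finsupp.erase_apply, Finsupp.single_apply, hab, Ne.symm hab, hfb]
        · simp [Finsupp.erase_apply, hka, hkb, Finsupp.single_apply,
            Ne.symm hka, Ne.symm hkb]
    · simp [hfa, Finsupp.single_apply, Ne.symm hab]
    · simp [hfb, Finsupp.single_apply, hab]

lemma tsum_extract1 {F : (ℕ →₀ ℕ) → ℝ} (hF : Summable F) (a : ℕ)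
    (u : ℕ → ℝ) (V : {f : ℕ →₀ ℕ // f a = 0} → ℝ)
    (hdec : ∀ (f : {f : ℕ →₀ ℕ // f a = 0}) (m : ℕ),
      F (f.1 + Finsupp.single a m) = V f * u m) :
    ∑' e, F e = (∑' f : {f : ℕ →₀ ℕ // f a = 0}, V f) * ∑' m, u m := by
  have h0 : ∀ p : {f : ℕ →₀ ℕ // f a = 0} × ℕ, F ((extract1 a).symm p) = V p.1 * u p.2 := by
    intro p
    simp only [extract1, Equiv.coe_fn_symm_mk]
    exact hdec p.1 p.2
  have hS : Summable fun p : {f : ℕ →₀ ℕ // f a = 0} × ℕ => V p.1 * u p.2 := by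
    have : Summable (F ∘ (extract1 a).symm) := ((extract1 a).symm.summable_iff).mpr hF
    refine this.congr fun p => (h0 p)
  calc ∑' e, F e = ∑' p : {f : ℕ →₀ ℕ // f a = 0} × ℕ, F ((extract1 a).symm p) :=
        ((extract1 a).symm.tsum_eq F).symm
    _ = ∑' p : {f : ℕ →₀ ℕ // f a = 0} × ℕ, V p.1 * u p.2 := tsum_congr h0
    _ = ∑' f : {f : ℕ →₀ ℕ // f a = 0}, ∑' m, V f * u m := hS.tsum_prod
    _ = ∑' f : {f : ℕ →₀ ℕ // f a = 0}, V f * ∑' m, u m := by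
        exact tsum_congr fun f => tsum_mul_left
    _ = (∑' f : {f : ℕ →₀ ℕ // f a = 0}, V f) * ∑' m, u m := tsum_mul_right

lemma tsum_extract2 {F : (ℕ →₀ ℕ) → ℝ} (hF : Summable F) {a b : ℕ} (hab : a ≠ b)
    {u v : ℕ → ℝ} (hu : Summable fun m => |u m|) (hv : Summable fun m => |v m|)
    (V : {f : ℕ →₀ ℕ // f a = 0 ∧ f b = 0} → ℝ)
    (hdec : ∀ (f : {f : ℕ →₀ ℕ // f a = 0 ∧ f b = 0}) (m m' : ℕ),
      F (f.1 + Finsupp.single a m + Finsupp.single b m') = V f * u m * v m') :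
    ∑' e, F e = (∑' f : {f : ℕ →₀ ℕ // f a = 0 ∧ f b = 0}, V f) * (∑' m, u m) * ∑' m, v m := by
  have h0 : ∀ p : {f : ℕ →₀ ℕ // f a = 0 ∧ f b = 0} × ℕ × ℕ,
      F ((extract2 a b hab).symm p) = V p.1 * u p.2.1 * v p.2.2 := by
    intro p
    simp only [extract2, Equiv.coe_fn_symm_mk]
    exact hdec p.1 p.2.1 p.2.2
  have hS : Summable fun p : {f : ℕ →₀ ℕ // f a = 0 ∧ f b = 0} × ℕ × ℕ => V p.1 * u p.2.1 * v p.2.2 := by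
    have : Summable (F ∘ (extract2 a b hab).symm) :=
      ((extract2 a b hab).symm.summable_iff).mpr hF
    exact this.congr fun p => (h0 p)
  have huv : ∑' mm : ℕ × ℕ, u mm.1 * v mm.2 = (∑' m, u m) * ∑' m, v m :=
    (tsum_mul_tsum_of_summable_norm hu hv).symm
  calc ∑' e, F e = ∑' p : {f : ℕ →₀ ℕ // f a = 0 ∧ f b = 0} × ℕ × ℕ, F ((extract2 a b hab).symm p) :=
        ((extract2 a b hab).symm.tsum_eq F).symm
    _ = ∑' p : {f : ℕ →₀ ℕ // f a = 0 ∧ f b = 0} × ℕ × ℕ, V p.1 * u p.2.1 * v p.2.2 := tsum_congr h0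
    _ = ∑' f : {f : ℕ →₀ ℕ // f a = 0 ∧ f b = 0}, ∑' mm : ℕ × ℕ, V f * u mm.1 * v mm.2 := hS.tsum_prod
    _ = ∑' f : {f : ℕ →₀ ℕ // f a = 0 ∧ f b = 0}, V f * ((∑' m, u m) * ∑' m, v m) := by
        refine tsum_congr fun f => ?_
        rw [← huv, ← tsum_mul_left]
        exact tsum_congr fun mm => by ring
    _ = (∑' f : {f : ℕ →₀ ℕ // f a = 0 ∧ f b = 0}, V f) * ((∑' m, u m) * ∑' m, v m) := tsum_mul_right
    _ = (∑' f : {f : ℕ →₀ ℕ // f a = 0 ∧ f b = 0}, V f) * (∑' m, u m) * ∑' m, v m := by ring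

/-! ### Specific weights -/

noncomputable def qq : ℕ → ℝ := fun k => q ^ (k + 1)
noncomputable def rr : ℕ → ℝ := fun k => -(q ^ (k + 1))

lemma qq_nonneg (k : ℕ) : 0 ≤ qq k := qp_nonneg _
lemma abs_rr (k : ℕ) : |rr k| = q ^ (k+1) := by
  rw [rr, abs_neg, abs_of_nonneg (qp_nonneg _)]
lemma rr_abs_le (k : ℕ) : |rr k| ≤ q ^ (k+1) := le_of_eq (abs_rr k)
lemma qq_abs_le (k : ℕ) : |qq k| ≤ q ^ (k+1) := le_of_eq (abs_of_nonneg (qq_nonneg k))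

lemma abs_lt_one_of_le {r : ℕ → ℝ} (hr : ∀ k, |r k| ≤ q ^ (k+1)) (k : ℕ) : |r k| < 1 :=
  lt_of_le_of_lt (hr k) (qp_lt_one k)

lemma one_sub_pos_of_le {r : ℕ → ℝ} (hr : ∀ k, |r k| ≤ q ^ (k+1)) (k : ℕ) : 0 < 1 - r k := by
  have := abs_lt_one_of_le hr k
  have := abs_lt.mp this
  linarith [this.2]

lemma summable_Wqq : Summable (W qq) := by
  have h := summable_master (w := fun k m => qq k ^ m) (ρ := qq) (∅ : Finset ℕ)
    (fun k m => pow_nonneg (qq_nonneg k) m)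
    (fun k => summable_geometric_of_lt_one (qq_nonneg k) (qp_lt_one k))
    qq_nonneg (fun k => le_trans (qp_le_half k) (by norm_num)) summable_qp
    (fun k _ m => rfl)
  refine h.congr fun e => ?_
  rw [Finset.union_empty, ← W_eq_prod qq e (le_refl _)]

lemma abs_W_le {r : ℕ → ℝ} (hr : ∀ k, |r k| ≤ q ^ (k+1)) (e : ℕ →₀ ℕ) :
    |W r e| ≤ W qq e := by
  rw [abs_W]
  exact W_le_W (fun k => abs_nonneg _) hr e

lemma summable_W_of_le {r : ℕ → ℝ} (hr : ∀ k, |r k| ≤ q ^ (k+1)) : Summable (W r) :=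
  Summable.of_norm_bounded summable_Wqq fun e => abs_W_le hr e

lemma marked_eq_prod {a b : ℕ} (hab : a ≠ b) (e : ℕ →₀ ℕ) :
    (e a : ℝ) * e b * W qq e
      = ∏ k ∈ e.support ∪ {a, b},
          ((if k = a ∨ k = b then (e k : ℝ) else 1) * qq k ^ e k) := by
  classical
  have hsub : ({a, b} : Finset ℕ) ⊆ e.support ∪ {a, b} := Finset.subset_union_right
  rw [Finset.prod_mul_distrib]
  have h2 : ∏ k ∈ e.support ∪ {a, b}, qq k ^ e k = W qq e :=
    (W_eq_prod qq e Finset.subset_union_left).symm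
  have h1 : ∏ k ∈ e.support ∪ {a, b}, (if k = a ∨ k = b then (e k : ℝ) else 1)
      = (e a : ℝ) * e b := by
    rw [← Finset.prod_subset hsub (by
      intro k _ hk
      rw [Finset.mem_insert, Finset.mem_singleton] at hk
      rw [if_neg hk])]
    rw [Finset.prod_pair hab]
    simp [hab, Ne.symm hab]
  rw [h1, h2]

lemma summable_marked_qq {a b : ℕ} (hab : a ≠ b) :
    Summable fun e : ℕ →₀ ℕ => (e a : ℝ) * e b * W qq e := by
  classical
  have h := summable_master
    (w := fun k m => (if k = a ∨ k = b then (m : ℝ) else 1) * qq k ^ m) (ρ := qq)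
    ({a, b} : Finset ℕ)
    (fun k m => by
      by_cases hk : k = a ∨ k = b
      · rw [if_pos hk]; exact mul_nonneg (Nat.cast_nonneg m) (pow_nonneg (qq_nonneg k) m)
      · rw [if_neg hk, one_mul]; exact pow_nonneg (qq_nonneg k) m)
    (fun k => by
      by_cases hk : k = a ∨ k = b
      · simp only [if_pos hk]
        have := summable_pow_mul_geometric_of_norm_lt_one (R := ℝ) 1
          (r := qq k) (by rw [Real.norm_eq_abs, abs_of_nonneg (qq_nonneg k)]; exact qp_lt_one k)
        refine this.congr fun m => by rw [pow_one]
      · simp only [if_neg hk, one_mul]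
        exact summable_geometric_of_lt_one (qq_nonneg k) (qp_lt_one k))
    qq_nonneg (fun k => le_trans (qp_le_half k) (by norm_num)) summable_qp
    (fun k hk m => by
      rw [Finset.mem_insert, Finset.mem_singleton] at hk
      rw [if_neg hk, one_mul])
  refine h.congr fun e => (marked_eq_prod hab e).symm

lemma summable_marked {r : ℕ → ℝ} (hr : ∀ k, |r k| ≤ q ^ (k+1)) {a b : ℕ} (hab : a ≠ b) :
    Summable fun e : ℕ →₀ ℕ => (e a : ℝ) * e b * W r e := by
  apply Summable.of_norm_bounded (summable_marked_qq hab)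
  intro e
  rw [Real.norm_eq_abs, abs_mul, abs_mul, Nat.abs_cast, Nat.abs_cast]
  have h1 : 0 ≤ (e a : ℝ) * e b := by positivity
  calc (e a : ℝ) * e b * |W r e| ≤ (e a : ℝ) * e b * W qq e :=
        mul_le_mul_of_nonneg_left (abs_W_le hr e) h1
    _ = (e a : ℝ) * e b * W qq e := rfl

/-! ### Euler-type product expansion -/

lemma summable_abs_geo {x : ℝ} (h : |x| < 1) : Summable fun m : ℕ => |x ^ m| := by
  refine (summable_geometric_of_lt_one (abs_nonneg x) h).congr fun m => (abs_pow x m).symm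

lemma summable_abs_coe_mul_geo {x : ℝ} (h : |x| < 1) :
    Summable fun m : ℕ => |(m : ℝ) * x ^ m| := by
  have := summable_pow_mul_geometric_of_norm_lt_one (R := ℝ) 1
    (r := |x|) (by rwa [Real.norm_eq_abs, abs_abs])
  refine this.congr fun m => ?_
  rw [pow_one, abs_mul, Nat.abs_cast, abs_pow]

lemma prod_eq_tsum_ind {r : ℕ → ℝ} (hr : ∀ k, |r k| ≤ q ^ (k+1)) (s : Finset ℕ) :
    ∏ k ∈ s, (1 - r k)⁻¹
      = ∑' e : ℕ →₀ ℕ, (if e.support ⊆ s then W r e else 0) := by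
  classical
  induction s using Finset.induction_on with
  | empty =>
      rw [Finset.prod_empty]
      rw [tsum_eq_single 0 (by
        intro e he
        rw [if_neg]
        intro hsub
        exact he (by
          ext k
          have := Finset.subset_empty.mp hsub
          by_contra hk
          have : k ∈ e.support := Finsupp.mem_support_iff.mpr hk
          simp_all))]
      rw [if_pos (by simp), W_zero]
  | @insert a s ha ih =>
      have habs : ∀ e, |if e.support ⊆ insert a s then W r e else 0| ≤ W qq e := by
        intro e
        by_cases h : e.support ⊆ insert a s
        · rw [if_pos h]; exact abs_W_le hr e
        · rw [if_neg h, abs_zero]; exact W_nonneg qq_nonneg e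
      have hF : Summable fun e : ℕ →₀ ℕ => if e.support ⊆ insert a s then W r e else 0 :=
        Summable.of_norm_bounded summable_Wqq habs
      have hiff : ∀ (f : {f : ℕ →₀ ℕ // f a = 0}) (m : ℕ),
          ((f.1 + Finsupp.single a m).support ⊆ insert a s ↔ f.1.support ⊆ s) := by
        intro f m
        constructor
        · intro h k hk
          have hfk : f.1 k ≠ 0 := Finsupp.mem_support_iff.mp hk
          have hka : k ≠ a := fun hh => hfk (hh ▸ f.2)
          have : (f.1 + Finsupp.single a m) k ≠ 0 := by
            rw [Finsupp.add_apply, Finsupp.single_apply, if_neg (Ne.symm hka), add_zero]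
            exact hfk
          have := h (Finsupp.mem_support_iff.mpr this)
          rw [Finset.mem_insert] at this
          exact this.resolve_left hka
        · intro h k hk
          have : (f.1 + Finsupp.single a m) k ≠ 0 := Finsupp.mem_support_iff.mp hk
          by_cases hka : k = a
          · exact hka ▸ Finset.mem_insert_self a s
          · rw [Finsupp.add_apply, Finsupp.single_apply, if_neg (Ne.symm hka), add_zero] at this
            exact Finset.mem_insert_of_mem (h (Finsupp.mem_support_iff.mpr this))
      have hdec : ∀ (f : {f : ℕ →₀ ℕ // f a = 0}) (m : ℕ),
          (if (f.1 + Finsupp.single a m).support ⊆ insert a s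
             then W r (f.1 + Finsupp.single a m) else 0)
          = (if f.1.support ⊆ s then W r f.1 else 0) * r a ^ m := by
        intro f m
        by_cases h : f.1.support ⊆ s
        · rw [if_pos ((hiff f m).mpr h), if_pos h, W_add, W_single]
        · rw [if_neg (fun hh => h ((hiff f m).mp hh)), if_neg h, zero_mul]
      rw [tsum_extract1 hF a (fun m => r a ^ m)
        (fun f => if f.1.support ⊆ s then W r f.1 else 0) hdec]
      have hsubty : (∑' f : {f : ℕ →₀ ℕ // f a = 0},
          (if f.1.support ⊆ s then W r f.1 else 0))
          = ∑' e : ℕ →₀ ℕ, (if e.support ⊆ s then W r e else 0) := by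
        have hss : Function.support (fun e : ℕ →₀ ℕ => if e.support ⊆ s then W r e else 0)
            ⊆ {f : ℕ →₀ ℕ | f a = 0} := by
          intro e he
          simp only [Function.mem_support] at he
          have hsub : e.support ⊆ s := by
            by_contra h
            exact he (if_neg h)
          show e a = 0
          by_contra h
          exact ha (hsub (Finsupp.mem_support_iff.mpr h))
        exact tsum_subtype_eq_of_support_subset (s := {f : ℕ →₀ ℕ | f a = 0}) hss
      rw [hsubty, ← ih, Finset.prod_insert ha,
        tsum_geometric_of_norm_lt_one (by rw [Real.norm_eq_abs]; exact abs_lt_one_of_le hr a)]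
      ring

lemma hasProd_inv {r : ℕ → ℝ} (hr : ∀ k, |r k| ≤ q ^ (k+1)) :
    HasProd (fun k => (1 - r k)⁻¹) (∑' e, W r e) := by
  classical
  rw [HasProd, Metric.tendsto_nhds]
  intro ε hε
  rw [SummationFilter.unconditional_filter, Filter.eventually_atTop]
  have habsW : Summable fun e : ℕ →₀ ℕ => |W r e| :=
    Summable.of_nonneg_of_le (fun e => abs_nonneg _) (fun e => abs_W_le hr e) summable_Wqq
  obtain ⟨T, hT⟩ : ∃ T : Finset (ℕ →₀ ℕ),
      (∑' e : {x : ℕ →₀ ℕ // x ∉ T}, |W r e.1|) < ε := by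
    have h := (tendsto_tsum_compl_atTop_zero (fun e : ℕ →₀ ℕ => |W r e|)).eventually
      (gt_mem_nhds hε)
    exact h.exists
  refine ⟨T.sup Finsupp.support, fun s hs => ?_⟩
  have habsind : ∀ e : ℕ →₀ ℕ, |if e.support ⊆ s then W r e else 0| ≤ W qq e := by
    intro e
    by_cases h : e.support ⊆ s
    · rw [if_pos h]; exact abs_W_le hr e
    · rw [if_neg h, abs_zero]; exact W_nonneg qq_nonneg e
  have habsg : ∀ e : ℕ →₀ ℕ, |if e.support ⊆ s then 0 else W r e| ≤ W qq e := by
    intro e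
    by_cases h : e.support ⊆ s
    · rw [if_pos h, abs_zero]; exact W_nonneg qq_nonneg e
    · rw [if_neg h]; exact abs_W_le hr e
  have hindS : Summable fun e : ℕ →₀ ℕ => if e.support ⊆ s then W r e else 0 :=
    Summable.of_norm_bounded summable_Wqq habsind
  have hgS : Summable fun e : ℕ →₀ ℕ => if e.support ⊆ s then 0 else W r e :=
    Summable.of_norm_bounded summable_Wqq habsg
  have hsplit : ∑' e, W r e
      = (∑' e : ℕ →₀ ℕ, if e.support ⊆ s then W r e else 0)
        + ∑' e : ℕ →₀ ℕ, if e.support ⊆ s then 0 else W r e := by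
    rw [← hindS.tsum_add hgS]
    refine tsum_congr fun e => ?_
    by_cases h : e.support ⊆ s <;> simp [h]
  have habsgS : Summable fun e : ℕ →₀ ℕ => |if e.support ⊆ s then 0 else W r e| :=
    Summable.of_nonneg_of_le (fun e => abs_nonneg _) habsg summable_Wqq
  have hh : ∀ e : ℕ →₀ ℕ, |if e.support ⊆ s then 0 else W r e|
      ≤ (if e ∈ T then 0 else |W r e|) := by
    intro e
    by_cases he : e ∈ T
    · rw [if_pos he]
      have hsub : e.support ⊆ s := le_trans (Finset.le_sup (f := Finsupp.support) he) hs
      rw [if_pos hsub, abs_zero]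
    · rw [if_neg he]
      by_cases h : e.support ⊆ s
      · rw [if_pos h, abs_zero]; exact abs_nonneg _
      · rw [if_neg h]
  have hhS : Summable fun e : ℕ →₀ ℕ => (if e ∈ T then 0 else |W r e|) := by
    refine Summable.of_nonneg_of_le (fun e => ?_) (fun e => ?_) habsW
    · by_cases he : e ∈ T
      · rw [if_pos he]
      · rw [if_neg he]; exact abs_nonneg _
    · by_cases he : e ∈ T
      · rw [if_pos he]; exact abs_nonneg _
      · rw [if_neg he]
  have hhsub : (∑' e : ℕ →₀ ℕ, (if e ∈ T then 0 else |W r e|))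
      = ∑' e : {x : ℕ →₀ ℕ // x ∉ T}, |W r e.1| := by
    have hss : Function.support (fun e : ℕ →₀ ℕ => if e ∈ T then 0 else |W r e|)
        ⊆ {x : ℕ →₀ ℕ | x ∉ T} := by
      intro e he
      simp only [Function.mem_support] at he
      show e ∉ T
      intro hmem
      exact he (if_pos hmem)
    rw [← tsum_subtype_eq_of_support_subset (s := {x : ℕ →₀ ℕ | x ∉ T}) hss]
    refine tsum_congr fun e => ?_
    rw [if_neg e.2]
  have key : |∑' e : ℕ →₀ ℕ, if e.support ⊆ s then 0 else W r e| < ε := by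
    calc |∑' e : ℕ →₀ ℕ, if e.support ⊆ s then 0 else W r e|
        ≤ ∑' e : ℕ →₀ ℕ, |if e.support ⊆ s then 0 else W r e| := by
          have := norm_tsum_le_tsum_norm (f := fun e : ℕ →₀ ℕ =>
            if e.support ⊆ s then 0 else W r e) (by
              simpa [Real.norm_eq_abs] using habsgS)
          simpa [Real.norm_eq_abs] using this
      _ ≤ ∑' e : ℕ →₀ ℕ, (if e ∈ T then 0 else |W r e|) := Summable.tsum_le_tsum hh habsgS hhS
      _ = ∑' e : {x : ℕ →₀ ℕ // x ∉ T}, |W r e.1| := hhsub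
      _ < ε := hT
  rw [Real.dist_eq, prod_eq_tsum_ind hr s, hsplit]
  have harith : ∀ x y : ℝ, x - (x + y) = -y := fun x y => by ring
  rw [harith, abs_neg]
  exact key

/-! ### Closed-form values -/

lemma tsum_W_split {r : ℕ → ℝ} (hr : ∀ k, |r k| ≤ q ^ (k+1)) {a b : ℕ} (hab : a ≠ b) :
    ∑' e, W r e
      = (∑' f : {f : ℕ →₀ ℕ // f a = 0 ∧ f b = 0}, W r f.1) * (1 - r a)⁻¹ * (1 - r b)⁻¹ := by
  have h := tsum_extract2 (summable_W_of_le hr) hab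
    (u := fun m => r a ^ m) (v := fun m => r b ^ m)
    (summable_abs_geo (abs_lt_one_of_le hr a)) (summable_abs_geo (abs_lt_one_of_le hr b))
    (fun f => W r f.1)
    (fun f m m' => by rw [W_add, W_add, W_single, W_single, mul_assoc])
  rw [h, tsum_geometric_of_norm_lt_one (by rw [Real.norm_eq_abs]; exact abs_lt_one_of_le hr a),
    tsum_geometric_of_norm_lt_one (by rw [Real.norm_eq_abs]; exact abs_lt_one_of_le hr b)]

lemma marked_apply {a b : ℕ} (hab : a ≠ b) (f : ℕ →₀ ℕ) (hfa : f a = 0) (hfb : f b = 0)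
    (m m' : ℕ) :
    (f + Finsupp.single a m + Finsupp.single b m') a = m
      ∧ (f + Finsupp.single a m + Finsupp.single b m') b = m' := by
  constructor
  · rw [Finsupp.add_apply, Finsupp.add_apply, Finsupp.single_apply, Finsupp.single_apply,
      if_pos rfl, if_neg hab.symm, hfa]
    ring
  · rw [Finsupp.add_apply, Finsupp.add_apply, Finsupp.single_apply, Finsupp.single_apply,
      if_pos rfl, if_neg hab, hfb]
    ring

lemma tsum_marked_eq {r : ℕ → ℝ} (hr : ∀ k, |r k| ≤ q ^ (k+1)) {a b : ℕ} (hab : a ≠ b) :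
    ∑' e, ((e a : ℝ) * e b * W r e)
      = (r a / (1 - r a)) * (r b / (1 - r b)) * ∑' e, W r e := by
  have ha1 : |r a| < 1 := abs_lt_one_of_le hr a
  have hb1 : |r b| < 1 := abs_lt_one_of_le hr b
  have ha0 : (1 : ℝ) - r a ≠ 0 := ne_of_gt (one_sub_pos_of_le hr a)
  have hb0 : (1 : ℝ) - r b ≠ 0 := ne_of_gt (one_sub_pos_of_le hr b)
  have h2 := tsum_extract2 (summable_marked hr hab) hab
    (u := fun m => (m : ℝ) * r a ^ m) (v := fun m => (m : ℝ) * r b ^ m)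
    (summable_abs_coe_mul_geo ha1) (summable_abs_coe_mul_geo hb1)
    (fun f => W r f.1)
    (fun f m m' => by
      have h := marked_apply hab f.1 f.2.1 f.2.2 m m'
      rw [h.1, h.2, W_add, W_add, W_single, W_single]
      push_cast
      ring)
  rw [tsum_coe_mul_geometric_of_norm_lt_one (by rwa [Real.norm_eq_abs]),
    tsum_coe_mul_geometric_of_norm_lt_one (by rwa [Real.norm_eq_abs])] at h2
  have h1 := tsum_W_split hr hab
  have hV : (∑' f : {f : ℕ →₀ ℕ // f a = 0 ∧ f b = 0}, W r f.1)
      = (∑' e, W r e) * (1 - r a) * (1 - r b) := by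
    rw [h1]
    field_simp
  rw [h2, hV]
  field_simp

/-! ### The specific constants -/

noncomputable def ap (t : ℕ) : ℝ := q ^ (t+1) / (1 + q ^ (t+1))
noncomputable def Dl (l : ℕ) : ℝ := q ^ l / (1 + q ^ (2*l+1))
noncomputable def Sv : ℝ := ∑' e, W rr e
noncomputable def Cq : ℝ := ∑' e, W qq e

lemma Cq_nonneg : 0 ≤ Cq := tsum_nonneg fun e => W_nonneg qq_nonneg e
lemma ap_nonneg (t : ℕ) : 0 ≤ ap t := div_nonneg (qp_nonneg _) (one_add_qp_pos t).le
lemma ap_le (t : ℕ) : ap t ≤ q ^ (t+1) :=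
  div_le_self (qp_nonneg _) (by linarith [qp_nonneg (t+1)])
lemma Dl_nonneg (l : ℕ) : 0 ≤ Dl l := by
  apply div_nonneg (qp_nonneg _)
  have := qp_nonneg (2*l+1); linarith
lemma Dl_le (l : ℕ) : Dl l ≤ q ^ l :=
  div_le_self (qp_nonneg _) (by linarith [qp_nonneg (2*l+1)])
lemma summable_ap : Summable ap :=
  Summable.of_nonneg_of_le ap_nonneg ap_le summable_qp
lemma summable_qpow : Summable fun l : ℕ => q ^ l :=
  summable_geometric_of_lt_one q_nonneg q_lt_one
lemma summable_Dl : Summable Dl :=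
  Summable.of_nonneg_of_le Dl_nonneg Dl_le summable_qpow

lemma tsum_marked_rr {a b : ℕ} (hab : a ≠ b) :
    ∑' e, ((e a : ℝ) * e b * W rr e) = ap a * ap b * Sv := by
  rw [tsum_marked_eq rr_abs_le hab]
  have : Sv = ∑' e, W rr e := rfl
  rw [← this]
  have hrra : rr a / (1 - rr a) = -(ap a) := by
    rw [rr, ap]
    have := one_add_qp_ne a
    field_simp
    rw [sub_neg_eq_add, mul_div_assoc, div_self this, mul_one]
  have hrrb : rr b / (1 - rr b) = -(ap b) := by
    rw [rr, ap]
    have := one_add_qp_ne b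
    field_simp
    rw [sub_neg_eq_add, mul_div_assoc, div_self this, mul_one]
  rw [hrra, hrrb]
  ring

lemma tsum_marked_qq_le {a b : ℕ} (hab : a ≠ b) :
    ∑' e, ((e a : ℝ) * e b * W qq e) ≤ 4 * q ^ (a+1) * q ^ (b+1) * Cq := by
  rw [tsum_marked_eq qq_abs_le hab]
  have : Cq = ∑' e, W qq e := rfl
  rw [← this]
  have hbound : ∀ c : ℕ, qq c / (1 - qq c) ≤ 2 * q ^ (c+1) := by
    intro c
    have h2 : qq c ≤ 1/2 := qp_le_half c
    have hpos : (0:ℝ) < 1 - qq c := by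
      have := qq_nonneg c; linarith
    rw [div_le_iff₀ hpos]
    have h0 : 0 ≤ qq c := qq_nonneg c
    show qq c ≤ 2 * q ^ (c+1) * (1 - qq c)
    have : (q : ℝ) ^ (c+1) = qq c := rfl
    rw [this]
    nlinarith
  have h1 := hbound a
  have h2 := hbound b
  have hnn : ∀ c : ℕ, 0 ≤ qq c / (1 - qq c) := by
    intro c
    apply div_nonneg (qq_nonneg c)
    have := qp_le_half c
    have := qq_nonneg c
    show (0:ℝ) ≤ 1 - qq c
    have h2 : qq c ≤ 1/2 := qp_le_half c
    linarith
  calc qq a / (1 - qq a) * (qq b / (1 - qq b)) * Cq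
      ≤ (2 * q ^ (a+1)) * (2 * q ^ (b+1)) * Cq := by
        apply mul_le_mul_of_nonneg_right _ Cq_nonneg
        apply mul_le_mul h1 h2 (hnn b) (by have := qp_nonneg (a+1); linarith)
    _ = 4 * q ^ (a+1) * q ^ (b+1) * Cq := by ring

/-! ### The (l,t)-indexed sums -/

lemma tsum_h {l t : ℕ} (hlt : t < l) :
    ∑' e : ℕ →₀ ℕ, (q ^ (l+1))⁻¹ * ((e (2*l) : ℝ) * e t * W rr e)
      = Sv * Dl l * ap t := by
  rw [tsum_mul_left, tsum_marked_rr (a := 2*l) (b := t) (by omega)]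
  have key : (q ^ (l+1))⁻¹ * ap (2*l) = Dl l := by
    rw [ap, Dl]
    have h1 := one_add_qp_ne (2*l)
    have h1' : (1:ℝ) + q ^ (2*l+1) ≠ 0 := h1
    have h3 : q ^ (2*l+1) = q ^ (l+1) * q ^ l := by ring
    have hne := (qp_pos (l+1)).ne'
    rw [show (2*l:ℕ)+1 = 2*l+1 from rfl, h3]
    field_simp
  calc (q ^ (l+1))⁻¹ * (ap (2*l) * ap t * Sv)
      = (q ^ (l+1))⁻¹ * ap (2*l) * (ap t * Sv) := by ring
    _ = Dl l * (ap t * Sv) := by rw [key]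
    _ = Sv * Dl l * ap t := by ring

lemma tsum_habs_le {l t : ℕ} (hlt : t < l) :
    ∑' e : ℕ →₀ ℕ, (q ^ (l+1))⁻¹ * ((e (2*l) : ℝ) * e t * W qq e)
      ≤ 4 * Cq * q ^ l * q ^ (t+1) := by
  rw [tsum_mul_left]
  have hle := tsum_marked_qq_le (a := 2*l) (b := t) (by omega)
  have hinv : (0:ℝ) ≤ (q ^ (l+1))⁻¹ := inv_nonneg.mpr (qp_nonneg _)
  calc (q ^ (l+1))⁻¹ * ∑' e, ((e (2*l) : ℝ) * e t * W qq e)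
      ≤ (q ^ (l+1))⁻¹ * (4 * q ^ (2*l+1) * q ^ (t+1) * Cq) := by
        apply mul_le_mul_of_nonneg_left _ hinv
        convert hle using 3
    _ = 4 * Cq * q ^ l * q ^ (t+1) := by
        have h3 : q ^ (2*l+1) = q ^ (l+1) * q ^ l := by ring
        rw [h3]
        have hne := (qp_pos (l+1)).ne'
        field_simp

/-! ### Double sums over (e, l) -/

noncomputable def gg (e : ℕ →₀ ℕ) (l : ℕ) : ℝ :=
  ∑ t ∈ Finset.range l, (q ^ (l+1))⁻¹ * ((e (2*l) : ℝ) * e t * W rr e)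

noncomputable def gabs (l : ℕ) (e : ℕ →₀ ℕ) : ℝ :=
  ∑ t ∈ Finset.range l, (q ^ (l+1))⁻¹ * ((e (2*l) : ℝ) * e t * W qq e)

lemma gabs_nonneg (l : ℕ) (e : ℕ →₀ ℕ) : 0 ≤ gabs l e :=
  Finset.sum_nonneg fun t _ => by
    have h1 : (0:ℝ) ≤ (q ^ (l+1))⁻¹ := inv_nonneg.mpr (qp_nonneg _)
    have h2 := W_nonneg qq_nonneg e
    positivity

lemma abs_gg_le (e : ℕ →₀ ℕ) (l : ℕ) : |gg e l| ≤ gabs l e := by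
  refine le_trans (Finset.abs_sum_le_sum_abs _ _) (Finset.sum_le_sum fun t _ => ?_)
  rw [abs_mul, abs_mul, abs_mul, abs_inv, abs_pow, abs_of_nonneg q_nonneg,
    Nat.abs_cast, Nat.abs_cast]
  have hc : (0:ℝ) ≤ (q ^ (l+1))⁻¹ * (e (2*l) : ℝ) * (e t : ℝ) := by
    have h0 : (0:ℝ) ≤ (q ^ (l+1))⁻¹ := inv_nonneg.mpr (qp_nonneg _)
    positivity
  have hW := abs_W_le rr_abs_le e
  have hmul := mul_le_mul_of_nonneg_left hW hc
  calc (q ^ (l+1))⁻¹ * ((e (2*l) : ℝ) * (e t : ℝ) * |W rr e|)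
      = ((q ^ (l+1))⁻¹ * (e (2*l) : ℝ) * (e t : ℝ)) * |W rr e| := by ring
    _ ≤ ((q ^ (l+1))⁻¹ * (e (2*l) : ℝ) * (e t : ℝ)) * W qq e := hmul
    _ = (q ^ (l+1))⁻¹ * ((e (2*l) : ℝ) * e t * W qq e) := by ring

lemma summable_habs (l t : ℕ) (hlt : t < l) :
    Summable fun e : ℕ →₀ ℕ => (q ^ (l+1))⁻¹ * ((e (2*l) : ℝ) * e t * W qq e) :=
  (summable_marked_qq (a := 2*l) (b := t) (by omega)).mul_left _

lemma summable_h (l t : ℕ) (hlt : t < l) :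
    Summable fun e : ℕ →₀ ℕ => (q ^ (l+1))⁻¹ * ((e (2*l) : ℝ) * e t * W rr e) :=
  ((summable_marked rr_abs_le (a := 2*l) (b := t) (by omega))).mul_left _

lemma summable_gabs_col (l : ℕ) : Summable fun e => gabs l e := by
  apply summable_sum
  intro t ht
  exact summable_habs l t (Finset.mem_range.mp ht)

lemma summable_gg_col (l : ℕ) : Summable fun e => gg e l := by
  apply summable_sum
  intro t ht
  exact summable_h l t (Finset.mem_range.mp ht)

lemma tsum_gabs_le (l : ℕ) :
    ∑' e, gabs l e ≤ (4 * Cq * ∑' t : ℕ, q ^ (t+1)) * q ^ l := by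
  have hsum : ∑' e, gabs l e
      = ∑ t ∈ Finset.range l, ∑' e : ℕ →₀ ℕ, (q ^ (l+1))⁻¹ * ((e (2*l) : ℝ) * e t * W qq e) := by
    rw [← Summable.tsum_finsetSum (fun t ht => summable_habs l t (Finset.mem_range.mp ht))]
    exact tsum_congr fun e => rfl
  have hnn : (0:ℝ) ≤ 4 * Cq * q ^ l := by
    have := Cq_nonneg
    have := qp_nonneg l
    positivity
  rw [hsum]
  calc ∑ t ∈ Finset.range l, ∑' e : ℕ →₀ ℕ, (q ^ (l+1))⁻¹ * ((e (2*l) : ℝ) * e t * W qq e)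
      ≤ ∑ t ∈ Finset.range l, 4 * Cq * q ^ l * q ^ (t+1) :=
        Finset.sum_le_sum fun t ht => tsum_habs_le (Finset.mem_range.mp ht)
    _ = (4 * Cq * q ^ l) * ∑ t ∈ Finset.range l, q ^ (t+1) := by rw [Finset.mul_sum]
    _ ≤ (4 * Cq * q ^ l) * ∑' t : ℕ, q ^ (t+1) := by
        apply mul_le_mul_of_nonneg_left _ hnn
        exact Summable.sum_le_tsum _ (fun t _ => qp_nonneg (t+1)) summable_qp
    _ = (4 * Cq * ∑' t : ℕ, q ^ (t+1)) * q ^ l := by ring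

lemma summable_gabs : Summable fun p : ℕ × (ℕ →₀ ℕ) => gabs p.1 p.2 := by
  rw [summable_prod_of_nonneg (fun p => gabs_nonneg p.1 p.2)]
  constructor
  · intro l; exact summable_gabs_col l
  · apply Summable.of_nonneg_of_le
      (fun l => tsum_nonneg fun e => gabs_nonneg l e)
      (fun l => tsum_gabs_le l)
    exact summable_qpow.mul_left _

lemma summable_gg : Summable (Function.uncurry gg) := by
  have hswap : Summable fun p : (ℕ →₀ ℕ) × ℕ => gabs p.2 p.1 := by
    have h := (Equiv.prodComm ℕ (ℕ →₀ ℕ)).summable_iff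
      (f := fun p : (ℕ →₀ ℕ) × ℕ => gabs p.2 p.1)
    apply h.mp
    exact summable_gabs.congr fun p => rfl
  apply Summable.of_norm_bounded hswap
  intro p
  rw [Real.norm_eq_abs]
  exact abs_gg_le p.1 p.2

lemma tsum_gg_col (l : ℕ) :
    ∑' e, gg e l = Sv * Dl l * ∑ t ∈ Finset.range l, ap t := by
  have hsum : ∑' e, gg e l
      = ∑ t ∈ Finset.range l, ∑' e : ℕ →₀ ℕ, (q ^ (l+1))⁻¹ * ((e (2*l) : ℝ) * e t * W rr e) := by
    rw [← Summable.tsum_finsetSum (fun t ht => summable_h l t (Finset.mem_range.mp ht))]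
    exact tsum_congr fun e => rfl
  rw [hsum, Finset.sum_congr rfl fun t ht => tsum_h (Finset.mem_range.mp ht)]
  exact (Finset.mul_sum _ _ _).symm

lemma tsum_tsum_gg :
    ∑' e : ℕ →₀ ℕ, ∑' l : ℕ, gg e l = ∑' l : ℕ, (Sv * Dl l * ∑ t ∈ Finset.range l, ap t) := by
  have hcomm := summable_gg.tsum_comm
  rw [← hcomm]
  exact tsum_congr fun l => tsum_gg_col l

/-! ### The triangular Fubini identity -/

noncomputable def FF : ℕ × ℕ → ℝ := fun p => if p.1 < p.2 then ap p.1 * Dl p.2 else 0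

lemma FF_nonneg (p : ℕ × ℕ) : 0 ≤ FF p := by
  rw [FF]
  by_cases h : p.1 < p.2
  · rw [if_pos h]; exact mul_nonneg (ap_nonneg _) (Dl_nonneg _)
  · rw [if_neg h]

lemma summable_FF : Summable FF := by
  rw [summable_prod_of_nonneg FF_nonneg]
  constructor
  · intro k
    apply Summable.of_nonneg_of_le (fun l => FF_nonneg (k, l)) (fun l => ?_)
      (summable_Dl.mul_left (ap k))
    rw [FF]
    by_cases h : k < l
    · rw [if_pos h]
    · rw [if_neg h]; exact mul_nonneg (ap_nonneg _) (Dl_nonneg _)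
  · apply Summable.of_nonneg_of_le
      (fun k => tsum_nonneg fun l => FF_nonneg (k, l)) (fun k => ?_)
      (summable_ap.mul_right (∑' l, Dl l))
    have h1 : ∀ l : ℕ, FF (k, l) ≤ ap k * Dl l := by
      intro l
      rw [FF]
      by_cases h : k < l
      · rw [if_pos h]
      · rw [if_neg h]; exact mul_nonneg (ap_nonneg _) (Dl_nonneg _)
    calc ∑' l, FF (k, l) ≤ ∑' l, ap k * Dl l :=
          Summable.tsum_le_tsum h1 (by
            apply Summable.of_nonneg_of_le (fun l => FF_nonneg (k, l)) h1
            exact summable_Dl.mul_left (ap k)) (summable_Dl.mul_left (ap k))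
      _ = ap k * ∑' l, Dl l := tsum_mul_left

lemma FF_left (l : ℕ) : ∑' k, FF (k, l) = Dl l * ∑ t ∈ Finset.range l, ap t := by
  rw [tsum_eq_sum (s := Finset.range l) (by
    intro k hk
    rw [FF, if_neg]
    simpa using fun h => hk (Finset.mem_range.mpr h))]
  rw [Finset.mul_sum]
  refine Finset.sum_congr rfl fun t ht => ?_
  rw [FF, if_pos (Finset.mem_range.mp ht)]
  ring

lemma FF_right (k : ℕ) : ∑' l, FF (k, l) = ap k * ∑' j, Dl (k + j + 1) := by
  have hinj : Function.Injective fun j : ℕ => k + j + 1 := by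
    intro x y h
    simp only at h
    omega
  have hsupp : Function.support (fun l => FF (k, l)) ⊆ Set.range fun j : ℕ => k + j + 1 := by
    intro l hl
    simp only [Function.mem_support] at hl
    have hkl : k < l := by
      by_contra h
      exact hl (if_neg h)
    exact ⟨l - k - 1, by show k + (l - k - 1) + 1 = l; omega⟩
  rw [← Function.Injective.tsum_eq hinj hsupp]
  rw [← tsum_mul_left]
  refine tsum_congr fun j => ?_
  rw [FF, if_pos (by omega : k < k + j + 1)]

lemma triangular :
    ∑' l, (Dl l * ∑ t ∈ Finset.range l, ap t) = ∑' k, (ap k * ∑' j, Dl (k + j + 1)) := by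
  have h1 : ∑' l, (Dl l * ∑ t ∈ Finset.range l, ap t) = ∑' l, ∑' k, FF (k, l) :=
    tsum_congr fun l => (FF_left l).symm
  have h2 : ∑' k, (ap k * ∑' j, Dl (k + j + 1)) = ∑' k, ∑' l, FF (k, l) :=
    tsum_congr fun k => (FF_right k).symm
  rw [h1, h2]
  exact Summable.tsum_comm (f := fun k l => FF (k, l)) (summable_FF.congr fun p => rfl)

/-! ### Partitions and difference sequences -/

noncomputable def sig (e : ℕ →₀ ℕ) (k : ℕ) : ℕ :=
  ∑ t ∈ e.support.filter (fun t => k ≤ t), e t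

lemma sig_step (e : ℕ →₀ ℕ) (k : ℕ) : sig e k = e k + sig e (k+1) := by
  classical
  rw [sig, sig]
  have hsplit : e.support.filter (fun t => k ≤ t)
      = e.support.filter (fun t => t = k) ∪ e.support.filter (fun t => k+1 ≤ t) := by
    ext t
    simp only [Finset.mem_filter, Finset.mem_union]
    constructor
    · rintro ⟨ht, hk⟩
      rcases eq_or_lt_of_le hk with h | h
      · exact Or.inl ⟨ht, h.symm⟩
      · exact Or.inr ⟨ht, h⟩
    · rintro (⟨ht, hk⟩ | ⟨ht, hk⟩)
      · exact ⟨ht, by omega⟩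
      · exact ⟨ht, by omega⟩
  rw [hsplit, Finset.sum_union (by
    rw [Finset.disjoint_left]
    intro t ht ht'
    simp only [Finset.mem_filter] at ht ht'
    omega)]
  congr 1
  by_cases hk : k ∈ e.support
  · rw [Finset.filter_eq', if_pos hk, Finset.sum_singleton]
  · rw [Finset.filter_eq', if_neg hk, Finset.sum_empty]
    exact (Finsupp.notMem_support_iff.mp hk).symm

lemma sig_anti (e : ℕ →₀ ℕ) {k k' : ℕ} (h : k ≤ k') : sig e k' ≤ sig e k := by
  apply Finset.sum_le_sum_of_subset
  intro t ht
  simp only [Finset.mem_filter] at ht ⊢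
  exact ⟨ht.1, le_trans h ht.2⟩

lemma sig_pos (e : ℕ →₀ ℕ) {t k : ℕ} (ht : t ∈ e.support) (hk : k ≤ t) : 0 < sig e k := by
  have hmem : t ∈ e.support.filter (fun t => k ≤ t) := Finset.mem_filter.mpr ⟨ht, hk⟩
  have h1 := Finset.single_le_sum (f := fun t => e t) (fun i _ => Nat.zero_le _) hmem
  have het : 0 < e t := Nat.pos_of_ne_zero (Finsupp.mem_support_iff.mp ht)
  rw [sig]
  omega

lemma sig_zero_split (e : ℕ →₀ ℕ) (k : ℕ) :
    sig e 0 = sig e k + ∑ t ∈ Finset.range k, e t := by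
  induction k with
  | zero => simp
  | succ n ih =>
      rw [ih, Finset.sum_range_succ, sig_step e n]
      omega

noncomputable def len (e : ℕ →₀ ℕ) : ℕ :=
  if h : e.support.Nonempty then e.support.max' h + 1 else 0

lemma lt_len {e : ℕ →₀ ℕ} {t : ℕ} (ht : t ∈ e.support) : t < len e := by
  rw [len, dif_pos ⟨t, ht⟩]
  exact Nat.lt_succ_of_le (Finset.le_max' _ t ht)

lemma sig_eq_zero_of_ge {e : ℕ →₀ ℕ} {k : ℕ} (h : len e ≤ k) : sig e k = 0 := by
  rw [sig, Finset.filter_false_of_mem, Finset.sum_empty]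
  intro t ht
  have := lt_len ht
  omega

lemma sig_pos_of_lt_len {e : ℕ →₀ ℕ} {k : ℕ} (h : k < len e) : 0 < sig e k := by
  rw [len] at h
  by_cases hne : e.support.Nonempty
  · rw [dif_pos hne] at h
    exact sig_pos e (Finset.max'_mem _ hne) (by omega)
  · rw [dif_neg hne] at h; omega

noncomputable def plist (e : ℕ →₀ ℕ) : List ℕ := (List.range (len e)).map (sig e)

lemma plist_sorted (e : ℕ →₀ ℕ) : List.Pairwise (· ≥ ·) (plist e) := by
  rw [plist, List.pairwise_map]
  exact (List.pairwise_lt_range (n := _)).imp (fun h => sig_anti e (le_of_lt h))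

lemma plist_pos (e : ℕ →₀ ℕ) : ∀ i ∈ plist e, 0 < i := by
  intro i hi
  rw [plist, List.mem_map] at hi
  obtain ⟨k, hk, rfl⟩ := hi
  exact sig_pos_of_lt_len (List.mem_range.mp hk)

noncomputable def Nsum (e : ℕ →₀ ℕ) : ℕ := ∑ t ∈ e.support, (t+1) * e t

lemma sum_range_list (f : ℕ → ℕ) (m : ℕ) :
    ((List.range m).map f).sum = ∑ k ∈ Finset.range m, f k := by
  induction m with
  | zero => simp
  | succ n ih =>
      rw [List.range_succ, List.map_append, List.sum_append, Finset.sum_range_succ, ih]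
      simp

lemma plist_sum (e : ℕ →₀ ℕ) : (plist e).sum = Nsum e := by
  rw [plist, sum_range_list]
  have h1 : ∀ k, sig e k = ∑ t ∈ e.support, if k ≤ t then e t else 0 := by
    intro k; rw [sig, Finset.sum_filter]
  rw [Finset.sum_congr rfl fun k _ => h1 k, Finset.sum_comm, Nsum]
  refine Finset.sum_congr rfl fun t ht => ?_
  have hlt : t < len e := lt_len ht
  calc ∑ k ∈ Finset.range (len e), (if k ≤ t then e t else 0)
      = ∑ k ∈ (Finset.range (len e)).filter (fun k => k ≤ t), e t :=
        (Finset.sum_filter _ _).symm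
    _ = (t+1) * e t := by
        rw [show (Finset.range (len e)).filter (fun k => k ≤ t) = Finset.range (t+1) by
          ext k
          simp only [Finset.mem_filter, Finset.mem_range]
          omega]
        rw [Finset.sum_const, Finset.card_range, smul_eq_mul]

noncomputable def toPart (e : ℕ →₀ ℕ) : Σ n : ℕ, Nat.Partition n :=
  ⟨Nsum e,
   { parts := (plist e : Multiset ℕ)
     parts_pos := fun {i} hi => plist_pos e i (Multiset.mem_coe.mp hi)
     parts_sum := by rw [Multiset.sum_coe, plist_sum] }⟩

lemma sort_coe {l : List ℕ} (hl : List.Pairwise (· ≥ ·) l) :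
    Multiset.sort (↑l : Multiset ℕ) (· ≥ ·) = l :=
  List.Perm.eq_of_pairwise' (Multiset.pairwise_sort _ _) hl
    (Multiset.coe_eq_coe.mp (Multiset.sort_eq _ _))

lemma plist_length (e : ℕ →₀ ℕ) : (plist e).length = len e := by
  rw [plist, List.length_map, List.length_range]

lemma getD_plist (e : ℕ →₀ ℕ) (k : ℕ) : (plist e).getD k 0 = sig e k := by
  by_cases hk : k < len e
  · have hlen : k < (plist e).length := by rw [plist_length]; exact hk
    have hdef : plist e = (List.range (len e)).map (sig e) := rfl
    rw [List.getD_eq_getElem _ _ hlen, List.getElem_of_eq hdef, List.getElem_map,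
      List.getElem_range]
  · have hlen : (plist e).length ≤ k := by rw [plist_length]; omega
    rw [List.getD_eq_default _ _ hlen, sig_eq_zero_of_ge (by omega : len e ≤ k)]

lemma partOf_toPart (e : ℕ →₀ ℕ) (k : ℕ) : partOf (toPart e).2 (k+1) = sig e k := by
  show (((toPart e).2.parts).sort (· ≥ ·)).getD (k+1-1) 0 = sig e k
  have hparts : (toPart e).2.parts = (↑(plist e) : Multiset ℕ) := rfl
  rw [hparts, sort_coe (plist_sorted e), show k + 1 - 1 = k from rfl]
  exact getD_plist e k

/-! ### Inverse map -/

noncomputable def sortedParts (x : Σ n : ℕ, Nat.Partition n) : List ℕ :=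
  x.2.parts.sort (· ≥ ·)

lemma sortedParts_sorted (x : Σ n : ℕ, Nat.Partition n) :
    List.Pairwise (· ≥ ·) (sortedParts x) := Multiset.pairwise_sort _ _

lemma sortedParts_coe (x : Σ n : ℕ, Nat.Partition n) :
    (↑(sortedParts x) : Multiset ℕ) = x.2.parts := Multiset.sort_eq _ _

lemma sortedParts_pos (x : Σ n : ℕ, Nat.Partition n) :
    ∀ i ∈ sortedParts x, 0 < i := by
  intro i hi
  exact x.2.parts_pos (by rw [← sortedParts_coe x]; exact Multiset.mem_coe.mpr hi)

noncomputable def pp (x : Σ n : ℕ, Nat.Partition n) (t : ℕ) : ℕ :=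
  (sortedParts x).getD t 0

lemma getD_zero_of_ge {l : List ℕ} {t : ℕ} (h : l.length ≤ t) : l.getD t 0 = 0 :=
  List.getD_eq_default _ _ h

lemma getD_anti {l : List ℕ} (hl : List.Pairwise (· ≥ ·) l) {i j : ℕ} (hij : i ≤ j) :
    l.getD j 0 ≤ l.getD i 0 := by
  rcases eq_or_lt_of_le hij with rfl | hlt
  · exact le_refl _
  by_cases hj : j < l.length
  · have hi : i < l.length := lt_trans hlt hj
    rw [List.getD_eq_getElem _ _ hj, List.getD_eq_getElem _ _ hi]
    exact (List.pairwise_iff_getElem.mp hl) i j hi hj hlt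
  · rw [List.getD_eq_default _ _ (by omega)]
    exact Nat.zero_le _

lemma pp_anti (x : Σ n : ℕ, Nat.Partition n) (t : ℕ) : pp x (t+1) ≤ pp x t :=
  getD_anti (sortedParts_sorted x) (Nat.le_succ t)

lemma pp_zero_of_ge (x : Σ n : ℕ, Nat.Partition n) {t : ℕ}
    (h : (sortedParts x).length ≤ t) : pp x t = 0 := getD_zero_of_ge h

lemma pp_pos (x : Σ n : ℕ, Nat.Partition n) {t : ℕ} (h : t < (sortedParts x).length) :
    0 < pp x t := by
  rw [pp, List.getD_eq_getElem _ _ h]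
  exact sortedParts_pos x _ (List.getElem_mem h)

noncomputable def fromPart (x : Σ n : ℕ, Nat.Partition n) : ℕ →₀ ℕ :=
  Finsupp.onFinset (Finset.range (sortedParts x).length)
    (fun t => pp x t - pp x (t+1))
    (by
      intro t ht
      rw [Finset.mem_range]
      by_contra h
      push_neg at h
      rw [pp_zero_of_ge x h] at ht
      exact ht (Nat.zero_sub _))

lemma fromPart_apply (x : Σ n : ℕ, Nat.Partition n) (t : ℕ) :
    fromPart x t = pp x t - pp x (t+1) := rfl

lemma fromPart_supp (x : Σ n : ℕ, Nat.Partition n) :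
    (fromPart x).support ⊆ Finset.range (sortedParts x).length :=
  Finsupp.support_onFinset_subset

lemma left_inv_aux (e : ℕ →₀ ℕ) : fromPart (toPart e) = e := by
  ext t
  have hpp : ∀ k, pp (toPart e) k = sig e k := by
    intro k
    show ((toPart e).2.parts.sort (· ≥ ·)).getD k 0 = sig e k
    have hparts : (toPart e).2.parts = (↑(plist e) : Multiset ℕ) := rfl
    rw [hparts, sort_coe (plist_sorted e)]
    exact getD_plist e k
  rw [fromPart_apply, hpp, hpp, sig_step e t]
  omega

lemma sigma_part_ext {x y : Σ n : ℕ, Nat.Partition n} (h : x.2.parts = y.2.parts) :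
    x = y := by
  obtain ⟨n, p⟩ := x
  obtain ⟨m, q⟩ := y
  have hn : n = m := by
    rw [← p.parts_sum, ← q.parts_sum]
    exact congrArg Multiset.sum h
  subst hn
  exact congrArg (Sigma.mk n) (Nat.Partition.ext h)

lemma right_inv_aux (x : Σ n : ℕ, Nat.Partition n) : toPart (fromPart x) = x := by
  set L := (sortedParts x).length with hL
  have haux : ∀ k, L ≤ k → sig (fromPart x) k = pp x k := by
    intro k hk
    have h1 : len (fromPart x) ≤ L := by
      rw [len]
      by_cases hne : (fromPart x).support.Nonempty
      · rw [dif_pos hne]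
        have := fromPart_supp x (Finset.max'_mem _ hne)
        rw [Finset.mem_range] at this
        omega
      · rw [dif_neg hne]; omega
    rw [sig_eq_zero_of_ge (by omega), pp_zero_of_ge x hk]
  have hsig : ∀ d k, L ≤ k + d → sig (fromPart x) k = pp x k := by
    intro d
    induction d with
    | zero => intro k hk; exact haux k (by omega)
    | succ n ih =>
        intro k hk
        by_cases hkL : L ≤ k
        · exact haux k hkL
        · rw [sig_step, fromPart_apply, ih (k+1) (by omega)]
          have := pp_anti x k
          omega
  have hsig' : ∀ k, sig (fromPart x) k = pp x k := fun k => hsig L k (by omega)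
  have hlen_eq : len (fromPart x) = L := by
    rcases Nat.eq_zero_or_pos L with hL0 | hL0
    · have hsupp : (fromPart x).support = ∅ := by
        rw [← Finset.subset_empty]
        have := fromPart_supp x
        rwa [← hL, hL0, Finset.range_zero] at this
      rw [len, dif_neg (by rw [hsupp]; exact Finset.not_nonempty_empty), hL0]
    · have hval : fromPart x (L-1) ≠ 0 := by
        rw [fromPart_apply]
        have h1 := pp_pos x (show L - 1 < L by omega)
        have h2 : pp x (L-1+1) = 0 := pp_zero_of_ge x (by omega)
        omega
      have hmem : L - 1 ∈ (fromPart x).support := Finsupp.mem_support_iff.mpr hval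
      have hne : (fromPart x).support.Nonempty := ⟨_, hmem⟩
      rw [len, dif_pos hne]
      have hle : (fromPart x).support.max' hne ≤ L - 1 := by
        apply Finset.max'_le
        intro t ht
        have := fromPart_supp x ht
        rw [Finset.mem_range] at this
        omega
      have hge := Finset.le_max' _ _ hmem
      omega
  have hplist : plist (fromPart x) = sortedParts x := by
    apply List.ext_getElem
    · rw [plist_length]; exact hlen_eq
    · intro i h1 h2
      have hdef : plist (fromPart x) = (List.range (len (fromPart x))).map (sig (fromPart x)) :=
        rfl
      rw [List.getElem_of_eq hdef, List.getElem_map, List.getElem_range, hsig' i]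
      rw [pp] at *
      rw [List.getD_eq_getElem _ _ h2]
  apply sigma_part_ext
  show (↑(plist (fromPart x)) : Multiset ℕ) = x.2.parts
  rw [hplist]
  exact sortedParts_coe x

noncomputable def partEquiv : (ℕ →₀ ℕ) ≃ (Σ n : ℕ, Nat.Partition n) where
  toFun := toPart
  invFun := fromPart
  left_inv := left_inv_aux
  right_inv := right_inv_aux

/-! ### Final assembly -/

lemma gg_def (e : ℕ →₀ ℕ) (l : ℕ) :
    gg e l = ∑ t ∈ Finset.range l, (q ^ (l+1))⁻¹ * ((e (2*l) : ℝ) * e t * W rr e) := rfl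

lemma ap_def (t : ℕ) : ap t = q ^ (t+1) / (1 + q ^ (t+1)) := rfl
lemma Dl_def (l : ℕ) : Dl l = q ^ l / (1 + q ^ (2*l+1)) := rfl

lemma tprod_val : (∏' j : ℕ, (1 + q ^ (j + 1))⁻¹) = Sv := by
  have h := hasProd_inv (r := rr) rr_abs_le
  have heq : (fun k => (1 - rr k)⁻¹) = fun j : ℕ => (1 + q ^ (j + 1))⁻¹ := by
    funext k
    rw [rr]
    ring_nf
  rw [heq] at h
  exact h.tprod_eq

lemma W_rr_eq (e : ℕ →₀ ℕ) : W rr e = (-1 : ℝ) ^ (sig e 0) * q ^ (Nsum e) := by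
  have hsig0 : sig e 0 = ∑ t ∈ e.support, e t := by
    rw [sig]
    congr 1
    apply Finset.filter_true_of_mem
    intro t _
    exact Nat.zero_le t
  rw [W, Finsupp.prod, hsig0, Nsum]
  calc ∏ k ∈ e.support, rr k ^ e k
      = ∏ k ∈ e.support, ((-1 : ℝ) ^ e k * (q ^ (k+1)) ^ e k) := by
        refine Finset.prod_congr rfl fun k _ => ?_
        rw [rr, neg_pow]
    _ = (∏ k ∈ e.support, (-1 : ℝ) ^ e k) * ∏ k ∈ e.support, (q ^ (k+1)) ^ e k :=
        Finset.prod_mul_distrib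
    _ = (-1 : ℝ) ^ (∑ t ∈ e.support, e t) * q ^ (∑ t ∈ e.support, (t+1) * e t) := by
        rw [Finset.prod_pow_eq_pow_sum]
        congr 1
        have h2 : ∀ k ∈ e.support, (q ^ (k+1)) ^ e k = q ^ ((k+1) * e k) :=
          fun k _ => (pow_mul q (k+1) (e k)).symm
        rw [Finset.prod_congr rfl h2, Finset.prod_pow_eq_pow_sum]

lemma inner_eq (e : ℕ →₀ ℕ) :
    ((-1 : ℝ) ^ (sig e 0) *
       ∑' l : ℕ, q ^ ((Nsum e : ℤ) - ((l : ℤ) + 1)) *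
          ((sig e (2*l) : ℝ) - (sig e (2*l+1) : ℝ)) *
          ((sig e 0 : ℝ) - (sig e l : ℝ)))
      = ∑' l, gg e l := by
  rw [← tsum_mul_left]
  refine tsum_congr fun l => ?_
  have hd : ((sig e (2*l) : ℝ) - (sig e (2*l+1) : ℝ)) = (e (2*l) : ℝ) := by
    rw [sig_step e (2*l)]; push_cast; ring
  have hs : ((sig e 0 : ℝ) - (sig e l : ℝ)) = ∑ t ∈ Finset.range l, (e t : ℝ) := by
    rw [sig_zero_split e l]; push_cast; ring
  have hq : q ^ ((Nsum e : ℤ) - ((l : ℤ) + 1)) = q ^ (Nsum e) * (q ^ (l+1))⁻¹ := by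
    rw [zpow_sub₀ q_ne_zero, zpow_natCast, show ((l:ℤ)+1) = ((l+1 : ℕ) : ℤ) by push_cast; ring,
      zpow_natCast, div_eq_mul_inv]
  rw [hd, hs, hq]
  have hrhs : gg e l
      = ∑ t ∈ Finset.range l,
          (q ^ (l+1))⁻¹ * ((e (2*l) : ℝ) * e t * ((-1:ℝ) ^ (sig e 0) * q ^ (Nsum e))) := by
    rw [gg_def]
    exact Finset.sum_congr rfl fun t _ => by rw [W_rr_eq]
  rw [hrhs, Finset.mul_sum, Finset.mul_sum]
  exact Finset.sum_congr rfl fun t _ => by ring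

lemma stepB (e : ℕ →₀ ℕ) :
    ((-1 : ℝ) ^ (partOf (toPart e).2 1) *
      ∑' l : ℕ, q ^ (((toPart e).1 : ℤ) - ((l : ℤ) + 1)) *
        ((partOf (toPart e).2 (2*(l+1)-1) : ℝ) - (partOf (toPart e).2 (2*(l+1)) : ℝ)) *
        ((partOf (toPart e).2 1 : ℝ) - (partOf (toPart e).2 (l+1) : ℝ)))
    = ∑' l, gg e l := by
  have h1 : partOf (toPart e).2 1 = sig e 0 := by
    rw [show (1:ℕ) = 0 + 1 from rfl, partOf_toPart]
  rw [h1, ← inner_eq e]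
  congr 1
  refine tsum_congr fun l => ?_
  rw [show 2*(l+1)-1 = 2*l+1 from by omega, show 2*(l+1) = (2*l+1)+1 from by omega]
  rw [partOf_toPart, partOf_toPart, partOf_toPart]
  rfl

end RelY


/-- For `q = e^{−1}`:
`∏_{j≥1} 1/(1+q^j) · ( Σ_{k≥1} (q^k/(1+q^k)) Σ_{ℓ>k} q^{ℓ−1}/(1+q^{2ℓ−1}) )
 = Σ_{λ ∈ P} (−1)^{λ_1} Σ_{ℓ≥1} q^{|λ|−ℓ} (λ_{2ℓ−1} − λ_{2ℓ})(λ_1 − λ_ℓ)`,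
where the right-hand sum runs over all partitions of all nonnegative integers.
The inner sum over `ℓ > k` is parametrized by `ℓ = k + j + 2` with `j ≥ 0`
(and `k` ranging over `k + 1`, `k ≥ 0`); `q^{|λ|−ℓ}` is an integer power
(`zpow`, legitimate since `q > 0`). -/
theorem relY_partition_identity :
    (∏' j : ℕ, (1 + Real.exp (-1) ^ (j + 1))⁻¹) *
      (∑' k : ℕ, Real.exp (-1) ^ (k + 1) / (1 + Real.exp (-1) ^ (k + 1)) *
        ∑' j : ℕ, Real.exp (-1) ^ (k + j + 1) / (1 + Real.exp (-1) ^ (2 * (k + j + 2) - 1)))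
    = ∑' x : (Σ n : ℕ, Nat.Partition n), (-1 : ℝ) ^ (partOf x.2 1) *
        ∑' l : ℕ, Real.exp (-1) ^ ((x.1 : ℤ) - ((l : ℤ) + 1)) *
          ((partOf x.2 (2 * (l + 1) - 1) : ℝ) - (partOf x.2 (2 * (l + 1)) : ℝ)) *
          ((partOf x.2 1 : ℝ) - (partOf x.2 (l + 1) : ℝ)) := by

  rw [show Real.exp (-1) = RelY.q from rfl]
  rw [← Equiv.tsum_eq RelY.partEquiv]
  rw [RelY.tprod_val]
  have hL : (∑' k : ℕ, RelY.q ^ (k + 1) / (1 + RelY.q ^ (k + 1)) *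
        ∑' j : ℕ, RelY.q ^ (k + j + 1) / (1 + RelY.q ^ (2 * (k + j + 2) - 1)))
      = ∑' k : ℕ, RelY.ap k * ∑' j : ℕ, RelY.Dl (k + j + 1) := by
    refine tsum_congr fun k => ?_
    have hinner : (∑' j : ℕ, RelY.q ^ (k + j + 1) / (1 + RelY.q ^ (2 * (k + j + 2) - 1)))
        = ∑' j : ℕ, RelY.Dl (k + j + 1) :=
      tsum_congr fun j => by rw [show 2 * (k + j + 2) - 1 = 2*(k+j+1)+1 from by omega, RelY.Dl_def]
    rw [hinner]
    rfl
  rw [hL, ← RelY.triangular, ← tsum_mul_left]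
  rw [show (∑' l : ℕ, RelY.Sv * (RelY.Dl l * ∑ t ∈ Finset.range l, RelY.ap t))
      = ∑' l : ℕ, RelY.Sv * RelY.Dl l * ∑ t ∈ Finset.range l, RelY.ap t
    from tsum_congr fun l => by ring]
  rw [← RelY.tsum_tsum_gg]
  exact tsum_congr fun e => (RelY.stepB e).symm
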